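/- Let d ≥ 2, let x ∈ S^{d−1}, let F : S^{d−1} → ℝ^d be a bounded measurable map, let R be a random d×d orthogonal matrix distributed according to the Haar probability measure on O(d), and set x̄ = Rᵀ F(Rx), ρ = ⟨x̄, x⟩, ψ = ‖x̄‖₂, and v = x̄ − ρ·x. Then for every w ∈ ℝ^d with ⟨w, x⟩ = 0 and every bounded measurable function g : ℝ² → ℝ, one has E[⟨v, w⟩ · g(ρ, ψ)] = 0 and E[⟨v, w⟩² · g(ρ, ψ)] = (‖w‖₂²/(d − 1)) · E[‖v‖₂² · g(ρ, ψ)]. -/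

import Mathlib

open MeasureTheory
open scoped RealInnerProductSpace Matrix

instance matrixMeasurableSpace {n : Type*} : MeasurableSpace (Matrix n n ℝ) :=
  (inferInstance : MeasurableSpace (n → n → ℝ))

/-- Action of a matrix `R` on a vector of Euclidean space. -/
noncomputable def matAct {d : ℕ} (R : Matrix (Fin d) (Fin d) ℝ)
    (x : EuclideanSpace ℝ (Fin d)) : EuclideanSpace ℝ (Fin d) :=
  Matrix.toEuclideanLin R x

namespace Stmt3Aux

variable {d : ℕ}

abbrev G (d : ℕ) := Matrix.orthogonalGroup (Fin d) ℝ

lemma matAct_apply (R : Matrix (Fin d) (Fin d) ℝ) (y : EuclideanSpace ℝ (Fin d)) (i : Fin d) :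
    matAct R y i = ∑ j, R i j * y j := by
  simp [matAct, Matrix.toEuclideanLin_apply, Matrix.mulVec, dotProduct]

lemma matAct_mul (A B : Matrix (Fin d) (Fin d) ℝ) (y : EuclideanSpace ℝ (Fin d)) :
    matAct (A * B) y = matAct A (matAct B y) := by
  simp [matAct, Matrix.toEuclideanLin_apply, Matrix.mulVec_mulVec]

lemma matAct_one (y : EuclideanSpace ℝ (Fin d)) :
    matAct (1 : Matrix (Fin d) (Fin d) ℝ) y = y := by
  ext i
  simp [matAct_apply, Matrix.one_apply, Finset.sum_ite_eq]

lemma matAct_sub_smul (A : Matrix (Fin d) (Fin d) ℝ) (y z : EuclideanSpace ℝ (Fin d)) (c : ℝ) :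
    matAct A (y - c • z) = matAct A y - c • matAct A z := by
  simp [matAct, map_sub, _root_.map_smul]

lemma inner_matAct_left (A : Matrix (Fin d) (Fin d) ℝ) (u y : EuclideanSpace ℝ (Fin d)) :
    ⟪matAct Aᵀ u, y⟫ = ⟪u, matAct A y⟫ := by
  simp only [PiLp.inner_apply, RCLike.inner_apply, starRingEnd_apply, star_trivial,
    matAct_apply, Matrix.transpose_apply, Finset.sum_mul, Finset.mul_sum]
  rw [Finset.sum_comm]
  exact Finset.sum_congr rfl fun i _ => Finset.sum_congr rfl fun j _ => by ring

lemma star_eq_transpose (A : Matrix (Fin d) (Fin d) ℝ) : star A = Aᵀ := by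
  ext i j
  simp [Matrix.star_apply]

lemma inner_matAct_matAct {A : Matrix (Fin d) (Fin d) ℝ}
    (hA : A ∈ Matrix.orthogonalGroup (Fin d) ℝ) (u y : EuclideanSpace ℝ (Fin d)) :
    ⟪matAct A u, matAct A y⟫ = ⟪u, y⟫ := by
  have h := hA.1
  rw [← inner_matAct_left, ← matAct_mul, ← star_eq_transpose, h, matAct_one]

lemma norm_matAct {A : Matrix (Fin d) (Fin d) ℝ}
    (hA : A ∈ Matrix.orthogonalGroup (Fin d) ℝ) (u : EuclideanSpace ℝ (Fin d)) :
    ‖matAct A u‖ = ‖u‖ := by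
  have h := inner_matAct_matAct hA u u
  rw [real_inner_self_eq_norm_sq, real_inner_self_eq_norm_sq] at h
  nlinarith [norm_nonneg (matAct A u), norm_nonneg u]

lemma coe_inv_eq_transpose (Q : G d) :
    ((Q⁻¹ : G d) : Matrix (Fin d) (Fin d) ℝ) = (Q : Matrix (Fin d) (Fin d) ℝ)ᵀ := by
  rw [Matrix.UnitaryGroup.inv_val, star_eq_transpose]

lemma transpose_mem (Q : G d) : (Q : Matrix (Fin d) (Fin d) ℝ)ᵀ ∈ G d := by
  rw [← coe_inv_eq_transpose]
  exact (Q⁻¹).2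

lemma eq_one_of_matAct {A : Matrix (Fin d) (Fin d) ℝ}
    (h : ∀ y, matAct A y = y) : A = 1 := by
  apply Matrix.toEuclideanLin.injective
  apply LinearMap.ext
  intro y
  have := h y
  simpa [matAct, matAct_one] using (h y).trans (matAct_one y).symm

/-! ### Measurability -/

lemma measurable_entry (i j : Fin d) :
    Measurable fun A : Matrix (Fin d) (Fin d) ℝ => A i j := by
  have h : (fun A : Matrix (Fin d) (Fin d) ℝ => A i j)
      = (fun f : Fin d → Fin d → ℝ => f i j) ∘ (Matrix.of).symm := rfl
  rw [h]
  exact (measurable_pi_apply j).comp (measurable_pi_apply i) |>.comp measurable_id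

lemma measurable_matmul :
    Measurable fun p : Matrix (Fin d) (Fin d) ℝ × Matrix (Fin d) (Fin d) ℝ => p.1 * p.2 := by
  apply measurable_pi_lambda; intro i
  apply measurable_pi_lambda; intro j
  simp_rw [Matrix.mul_apply]
  apply Finset.measurable_sum
  intro k _
  exact ((measurable_entry i k).comp measurable_fst).mul
    ((measurable_entry k j).comp measurable_snd)

lemma measurable_mulG : Measurable fun p : G d × G d => p.1 * p.2 := by
  apply Measurable.subtype_mk
  exact measurable_matmul.comp ((measurable_subtype_coe.comp measurable_fst).prodMk
    (measurable_subtype_coe.comp measurable_snd))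

lemma measurable_invG : Measurable fun R : G d => R⁻¹ := by
  apply Measurable.subtype_mk
  show Measurable fun R : G d => (star (R : Matrix (Fin d) (Fin d) ℝ))
  apply measurable_pi_lambda; intro i
  apply measurable_pi_lambda; intro j
  show Measurable fun R : G d => star ((R : Matrix (Fin d) (Fin d) ℝ) j i)
  simp only [star_trivial]
  exact (measurable_entry j i).comp measurable_subtype_coe

lemma measurable_euclid {α : Type*} [MeasurableSpace α] {f : α → EuclideanSpace ℝ (Fin d)}
    (h : ∀ i, Measurable fun a => f a i) : Measurable f :=
  (WithLp.measurable_toLp 2 _).comp (measurable_pi_lambda _ h)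

lemma measurable_coord {α : Type*} [MeasurableSpace α] {f : α → EuclideanSpace ℝ (Fin d)}
    (hf : Measurable f) (i : Fin d) : Measurable fun a => f a i :=
  (measurable_pi_apply i).comp ((WithLp.measurable_ofLp 2 _).comp hf)

lemma measurable_matAct_fixed (x : EuclideanSpace ℝ (Fin d)) :
    Measurable fun R : G d => matAct (R : Matrix (Fin d) (Fin d) ℝ) x := by
  apply measurable_euclid; intro i
  simp_rw [matAct_apply]
  apply Finset.measurable_sum
  intro j _
  exact ((measurable_entry i j).comp measurable_subtype_coe).mul measurable_const

lemma measurable_matAct_transpose_pair :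
    Measurable fun p : G d × EuclideanSpace ℝ (Fin d) =>
      matAct ((p.1 : Matrix (Fin d) (Fin d) ℝ))ᵀ p.2 := by
  apply measurable_euclid; intro i
  simp_rw [matAct_apply, Matrix.transpose_apply]
  apply Finset.measurable_sum
  intro j _
  exact (((measurable_entry j i).comp measurable_subtype_coe).comp measurable_fst).mul
    (measurable_coord measurable_snd j)

/-! ### Right invariance -/

lemma right_invariant_integral {μ : Measure (G d)} [IsProbabilityMeasure μ]
    (hHaar : ∀ g : G d, Measure.map (fun R => g * R) μ = μ)
    (f : G d → ℝ) (hf : Measurable f) (C : ℝ) (hC : ∀ R, |f R| ≤ C) (Q : G d) :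
    ∫ R, f (R * Q) ∂μ = ∫ R, f R ∂μ := by
  have leftInv : ∀ (h : G d → ℝ), Measurable h → ∀ g : G d,
      ∫ R, h (g * R) ∂μ = ∫ R, h R ∂μ := by
    intro h hh g
    have hg : Measurable fun R : G d => g * R :=
      measurable_mulG.comp (measurable_const.prodMk measurable_id)
    conv_rhs => rw [← hHaar g]
    rw [integral_map (hg.aemeasurable : AEMeasurable (fun R => g * R) μ)
      hh.aestronglyMeasurable]
  set ν : Measure (G d) := μ.map (fun R => R⁻¹) with hν
  have hνprob : IsProbabilityMeasure ν := Measure.isProbabilityMeasure_map measurable_invG.aemeasurable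
  have hmapν : ∀ (h : G d → ℝ), Measurable h → ∫ S, h S ∂ν = ∫ T, h T⁻¹ ∂μ := by
    intro h hh
    rw [hν, integral_map measurable_invG.aemeasurable hh.aestronglyMeasurable]
  have keyA : ∀ c : G d, ∫ S, f (S * c) ∂ν = ∫ S, f S ∂ν := by
    intro c
    have h1 : Measurable fun S : G d => f (S * c) :=
      hf.comp (measurable_mulG.comp (measurable_id.prodMk measurable_const))
    rw [hmapν _ h1, hmapν _ hf]
    have he : ∀ T : G d, f (T⁻¹ * c) = (fun T => f T⁻¹) (c⁻¹ * T) := by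
      intro T
      simp only []
      congr 1
      rw [mul_inv_rev, inv_inv]
    simp_rw [he]
    exact leftInv _ (hf.comp measurable_invG) c⁻¹
  have main : ∀ Q' : G d, ∫ R, f (R * Q') ∂μ = ∫ S, f S ∂ν := by
    intro Q'
    have hmeas2 : Measurable fun p : G d × G d => f (p.1 * (p.2 * Q')) := by
      apply hf.comp
      exact measurable_mulG.comp (measurable_fst.prodMk
        (measurable_mulG.comp (measurable_snd.prodMk measurable_const)))
    have hint2 : Integrable (fun p : G d × G d => f (p.1 * (p.2 * Q'))) (ν.prod μ) := by
      refine (integrable_const C).mono' hmeas2.aestronglyMeasurable ?_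
      exact Filter.Eventually.of_forall fun p => by simpa [Real.norm_eq_abs] using hC _
    have fub := integral_integral_swap (f := fun S R => f (S * (R * Q'))) hint2
    have lhs_eq : ∫ S, ∫ R, f (S * (R * Q')) ∂μ ∂ν = ∫ R, f (R * Q') ∂μ := by
      have hS : ∀ S : G d, ∫ R, f (S * (R * Q')) ∂μ = ∫ R, f (R * Q') ∂μ := by
        intro S
        have := leftInv (fun T => f (T * Q'))
          (hf.comp (measurable_mulG.comp (measurable_id.prodMk measurable_const))) S
        simpa [mul_assoc] using this
      simp_rw [hS]
      simp
    have rhs_eq : ∫ R, ∫ S, f (S * (R * Q')) ∂ν ∂μ = ∫ S, f S ∂ν := by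
      have hR : ∀ R : G d, ∫ S, f (S * (R * Q')) ∂ν = ∫ S, f S ∂ν := fun R => keyA (R * Q')
      simp_rw [hR]
      simp
    rw [← lhs_eq, fub, rhs_eq]
  have k1 := main Q
  have k2 := main 1
  simp only [mul_one] at k2
  rw [k1, k2]

/-! ### Matrices from isometries -/

noncomputable def isoMatrix (L : EuclideanSpace ℝ (Fin d) ≃ₗᵢ[ℝ] EuclideanSpace ℝ (Fin d)) :
    Matrix (Fin d) (Fin d) ℝ :=
  Matrix.toEuclideanLin.symm L.toLinearEquiv.toLinearMap

lemma matAct_isoMatrix (L : EuclideanSpace ℝ (Fin d) ≃ₗᵢ[ℝ] EuclideanSpace ℝ (Fin d))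
    (y : EuclideanSpace ℝ (Fin d)) : matAct (isoMatrix L) y = L y := by
  simp [matAct, isoMatrix]

lemma isoMatrix_mem (L : EuclideanSpace ℝ (Fin d) ≃ₗᵢ[ℝ] EuclideanSpace ℝ (Fin d)) :
    isoMatrix L ∈ G d := by
  rw [Matrix.mem_orthogonalGroup_iff']
  have col : ∀ p k : Fin d, (isoMatrix L) k p = (L (EuclideanSpace.single p 1)) k := by
    intro p k
    rw [← matAct_isoMatrix L, matAct_apply]
    simp [EuclideanSpace.single_apply, Finset.sum_ite_eq]
  ext i j
  rw [Matrix.mul_apply, Matrix.one_apply]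
  have h1 : ∀ k, (isoMatrix L)ᵀ i k * (isoMatrix L) k j
      = (L (EuclideanSpace.single i 1)) k * (L (EuclideanSpace.single j 1)) k := by
    intro k
    rw [Matrix.transpose_apply, col i k, col j k]
  rw [Finset.sum_congr rfl fun k _ => h1 k]
  have h2 : ⟪L (EuclideanSpace.single i 1), L (EuclideanSpace.single j 1)⟫
      = ⟪(EuclideanSpace.single i (1:ℝ)), EuclideanSpace.single j 1⟫ :=
    L.inner_map_map _ _
  simp only [PiLp.inner_apply, RCLike.inner_apply, starRingEnd_apply, star_trivial] at h2
  rw [show (∑ k, (L (EuclideanSpace.single i 1)) k * (L (EuclideanSpace.single j 1)) k)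
      = ∑ k, (L (EuclideanSpace.single j 1)) k * (L (EuclideanSpace.single i 1)) k from
    Finset.sum_congr rfl fun k _ => mul_comm _ _, h2]
  simp [EuclideanSpace.single_apply, Finset.sum_ite_eq, eq_comm]

/-! ### The reflection fixing `x` -/

noncomputable def refl (x : EuclideanSpace ℝ (Fin d)) : Matrix (Fin d) (Fin d) ℝ :=
  Matrix.of fun i j => 2 * x i * x j - (if i = j then (1:ℝ) else 0)

lemma matAct_refl (x y : EuclideanSpace ℝ (Fin d)) :
    matAct (refl x) y = (2 * ∑ j, x j * y j) • x - y := by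
  ext i
  rw [matAct_apply]
  have : ∀ j, (refl x) i j * y j = 2 * x i * (x j * y j) - (if i = j then y j else 0) := by
    intro j
    simp only [refl, Matrix.of_apply]
    by_cases h : i = j <;> simp [h] <;> ring
  rw [Finset.sum_congr rfl fun j _ => this j, Finset.sum_sub_distrib, ← Finset.mul_sum,
    Finset.sum_ite_eq]
  simp only [PiLp.sub_apply, PiLp.smul_apply, smul_eq_mul, Finset.mem_univ, if_pos]
  ring

lemma refl_mem (x : EuclideanSpace ℝ (Fin d)) (hx : ∑ k, x k * x k = 1) :
    refl x ∈ G d := by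
  have hsymm : star (refl x) = refl x := by
    rw [star_eq_transpose]
    ext i j
    simp only [Matrix.transpose_apply, refl, Matrix.of_apply]
    by_cases h : i = j <;> simp [h, eq_comm] <;> ring
  rw [Matrix.mem_orthogonalGroup_iff', ← star_eq_transpose, hsymm]
  apply eq_one_of_matAct
  intro y
  rw [matAct_mul, matAct_refl, matAct_refl]
  set c := ∑ j, x j * y j with hc
  have h4 : ∑ j, x j * ((2 * c) • x - y) j = c := by
    simp only [PiLp.sub_apply, PiLp.smul_apply, smul_eq_mul, mul_sub, Finset.sum_sub_distrib]
    have h3 : ∑ j, x j * (2 * c * x j) = 2 * c := by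
      have : ∑ j, x j * (2 * c * x j) = (2 * c) * ∑ j, x j * x j := by
        rw [Finset.mul_sum]
        exact Finset.sum_congr rfl fun j _ => by ring
      rw [this, hx, mul_one]
    rw [h3, ← hc]
    ring
  rw [h4]
  abel

lemma integrable_of_bdd {μ : Measure (G d)} [IsProbabilityMeasure μ]
    {f : G d → ℝ} (hf : AEStronglyMeasurable f μ) {C : ℝ} (hC : ∀ R, |f R| ≤ C) :
    Integrable f μ :=
  (integrable_const C).mono' hf (Filter.Eventually.of_forall fun R => by
    simpa [Real.norm_eq_abs] using hC R)

lemma parseval (b : OrthonormalBasis (Fin d) ℝ (EuclideanSpace ℝ (Fin d)))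
    (y : EuclideanSpace ℝ (Fin d)) : ∑ i, ⟪y, b i⟫ ^ 2 = ‖y‖ ^ 2 := by
  calc ∑ i, ⟪y, b i⟫ ^ 2 = ∑ i, ⟪y, b i⟫ * ⟪b i, y⟫ :=
        Finset.sum_congr rfl fun i _ => by rw [real_inner_comm (b i) y, sq]
    _ = ⟪y, y⟫ := b.sum_inner_mul_inner y y
    _ = ‖y‖ ^ 2 := by rw [real_inner_self_eq_norm_mul_norm, sq]

end Stmt3Aux

set_option maxHeartbeats 2000000 in
theorem stmt3 (d : ℕ) (hd : 2 ≤ d)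
    (x : EuclideanSpace ℝ (Fin d)) (hx : ‖x‖ = 1)
    (F : EuclideanSpace ℝ (Fin d) → EuclideanSpace ℝ (Fin d))
    (hFmeas : Measurable F) (hFbd : ∃ C : ℝ, ∀ v, ‖F v‖ ≤ C)
    -- `μ` is the Haar probability measure on the orthogonal group `O(d)`
    (μ : Measure (Matrix.orthogonalGroup (Fin d) ℝ))
    (hprob : IsProbabilityMeasure μ)
    (hHaar : ∀ g : Matrix.orthogonalGroup (Fin d) ℝ,
      Measure.map (fun R => g * R) μ = μ)
    (xbar : Matrix.orthogonalGroup (Fin d) ℝ → EuclideanSpace ℝ (Fin d))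
    (hxbar : ∀ R : Matrix.orthogonalGroup (Fin d) ℝ,
      xbar R = matAct ((R : Matrix (Fin d) (Fin d) ℝ)ᵀ)
        (F (matAct (R : Matrix (Fin d) (Fin d) ℝ) x)))
    (ρ : Matrix.orthogonalGroup (Fin d) ℝ → ℝ) (hρ : ∀ R, ρ R = ⟪xbar R, x⟫)
    (ψ : Matrix.orthogonalGroup (Fin d) ℝ → ℝ) (hψ : ∀ R, ψ R = ‖xbar R‖)
    (v : Matrix.orthogonalGroup (Fin d) ℝ → EuclideanSpace ℝ (Fin d))
    (hv : ∀ R, v R = xbar R - ρ R • x)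
    (w : EuclideanSpace ℝ (Fin d)) (hw : ⟪w, x⟫ = 0)
    (g : ℝ × ℝ → ℝ) (hgmeas : Measurable g) (hgbd : ∃ C : ℝ, ∀ q, |g q| ≤ C) :
    ∫ R, ⟪v R, w⟫ * g (ρ R, ψ R) ∂μ = 0 ∧
    ∫ R, ⟪v R, w⟫ ^ 2 * g (ρ R, ψ R) ∂μ
      = (‖w‖ ^ 2 / ((d : ℝ) - 1)) * ∫ R, ‖v R‖ ^ 2 * g (ρ R, ψ R) ∂μ := by
  classical
  obtain ⟨e, rfl⟩ : ∃ e, d = e + 2 := ⟨d - 2, by omega⟩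
  obtain ⟨C, hC⟩ := hFbd
  obtain ⟨Cg, hCg⟩ := hgbd
  haveI := hprob
  have hC0 : 0 ≤ C := le_trans (norm_nonneg _) (hC 0)
  have hCg0 : 0 ≤ Cg := le_trans (abs_nonneg _) (hCg (0, 0))
  have hxx : ⟪x, x⟫ = 1 := by rw [real_inner_self_eq_norm_mul_norm, hx]; norm_num
  have hsum_xx : ∑ k, x k * x k = 1 := by
    have h := hxx
    rw [PiLp.inner_apply] at h
    simp only [RCLike.inner_apply, conj_trivial] at h
    exact h
  have hwx : ⟪x, w⟫ = 0 := by rw [real_inner_comm]; exact hw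
  -- bounds
  have hxbar_bd : ∀ R, ‖xbar R‖ ≤ C := fun R => by
    rw [hxbar R, Stmt3Aux.norm_matAct (Stmt3Aux.transpose_mem R)]; exact hC _
  have hρ_bd : ∀ R, |ρ R| ≤ C := fun R => by
    rw [hρ R]
    calc |⟪xbar R, x⟫| ≤ ‖xbar R‖ * ‖x‖ := abs_real_inner_le_norm _ _
      _ = ‖xbar R‖ := by rw [hx, mul_one]
      _ ≤ C := hxbar_bd R
  have hv_bd : ∀ R, ‖v R‖ ≤ 2 * C := fun R => by
    rw [hv R]
    calc ‖xbar R - ρ R • x‖ ≤ ‖xbar R‖ + ‖ρ R • x‖ := norm_sub_le _ _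
      _ = ‖xbar R‖ + |ρ R| := by rw [norm_smul, hx, mul_one, Real.norm_eq_abs]
      _ ≤ C + C := add_le_add (hxbar_bd R) (hρ_bd R)
      _ = 2 * C := by ring
  have hvx : ∀ R, ⟪v R, x⟫ = 0 := fun R => by
    rw [hv R, inner_sub_left, real_inner_smul_left, hρ R, hxx]; ring
  -- measurability
  have hxbarMeas : Measurable xbar := by
    have h1 := Stmt3Aux.measurable_matAct_fixed (d := e + 2) x
    have h2 : Measurable fun R : Matrix.orthogonalGroup (Fin (e+2)) ℝ =>
        F (matAct (R : Matrix (Fin (e+2)) (Fin (e+2)) ℝ) x) := hFmeas.comp h1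
    have hfe : xbar = fun R : Matrix.orthogonalGroup (Fin (e+2)) ℝ =>
        matAct ((R : Matrix (Fin (e+2)) (Fin (e+2)) ℝ))ᵀ
        (F (matAct (R : Matrix (Fin (e+2)) (Fin (e+2)) ℝ) x)) := funext hxbar
    rw [hfe]
    apply Stmt3Aux.measurable_euclid
    intro i
    simp_rw [Stmt3Aux.matAct_apply, Matrix.transpose_apply]
    apply Finset.measurable_sum
    intro j _
    exact ((Stmt3Aux.measurable_entry j i).comp measurable_subtype_coe).mul
      (Stmt3Aux.measurable_coord h2 j)
  have hρMeas : Measurable ρ := by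
    have hfe : ρ = fun R => ∑ i, xbar R i * x i := by
      funext R; rw [hρ R]; simp [PiLp.inner_apply, RCLike.inner_apply]
      exact Finset.sum_congr rfl fun _ _ => mul_comm _ _
    rw [hfe]
    exact Finset.measurable_sum _ fun i _ =>
      (Stmt3Aux.measurable_coord hxbarMeas i).mul measurable_const
  have hψMeas : Measurable ψ := by
    have hfe : ψ = fun R => ‖xbar R‖ := funext hψ
    rw [hfe]; exact continuous_norm.measurable.comp hxbarMeas
  have hvMeas : Measurable v := by
    have hfe : v = fun R => xbar R - ρ R • x := funext hv
    rw [hfe]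
    apply Stmt3Aux.measurable_euclid; intro i
    have h5 : (fun R => (xbar R - ρ R • x) i) = fun R => xbar R i - ρ R * x i := by
      funext R; simp [PiLp.sub_apply, PiLp.smul_apply]
    rw [h5]
    exact (Stmt3Aux.measurable_coord hxbarMeas i).sub (hρMeas.mul measurable_const)
  have hinnerMeas : ∀ w' : EuclideanSpace ℝ (Fin (e+2)), Measurable fun R => ⟪v R, w'⟫ := by
    intro w'
    have hfe : (fun R => ⟪v R, w'⟫) = fun R => ∑ i, v R i * w' i := by
      funext R; simp [PiLp.inner_apply, RCLike.inner_apply]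
      exact Finset.sum_congr rfl fun _ _ => mul_comm _ _
    rw [hfe]
    exact Finset.measurable_sum _ fun i _ =>
      (Stmt3Aux.measurable_coord hvMeas i).mul measurable_const
  have hfMeas : ∀ (w' : EuclideanSpace ℝ (Fin (e+2))) (k : ℕ),
      Measurable fun R => ⟪v R, w'⟫ ^ k * g (ρ R, ψ R) :=
    fun w' k => ((hinnerMeas w').pow_const k).mul (hgmeas.comp (hρMeas.prodMk hψMeas))
  have hfBd : ∀ (w' : EuclideanSpace ℝ (Fin (e+2))) (k : ℕ), ∀ R,
      |⟪v R, w'⟫ ^ k * g (ρ R, ψ R)| ≤ (2 * C * ‖w'‖) ^ k * Cg := by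
    intro w' k R
    rw [abs_mul, abs_pow]
    refine mul_le_mul (pow_le_pow_left₀ (abs_nonneg _) ?_ k) (hCg _) (abs_nonneg _)
      (by positivity)
    calc |⟪v R, w'⟫| ≤ ‖v R‖ * ‖w'‖ := abs_real_inner_le_norm _ _
      _ ≤ 2 * C * ‖w'‖ := mul_le_mul_of_nonneg_right (hv_bd R) (norm_nonneg _)
  have hfInt : ∀ (w' : EuclideanSpace ℝ (Fin (e+2))) (k : ℕ),
      Integrable (fun R => ⟪v R, w'⟫ ^ k * g (ρ R, ψ R)) μ :=
    fun w' k => Stmt3Aux.integrable_of_bdd (hfMeas w' k).aestronglyMeasurable (hfBd w' k)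
  -- master invariance under the stabilizer of x
  have master : ∀ Q : Matrix.orthogonalGroup (Fin (e+2)) ℝ,
      matAct (Q : Matrix (Fin (e+2)) (Fin (e+2)) ℝ) x = x →
      ∀ (w' : EuclideanSpace ℝ (Fin (e+2))) (k : ℕ),
      ∫ R, ⟪v R, matAct (Q : Matrix (Fin (e+2)) (Fin (e+2)) ℝ) w'⟫ ^ k * g (ρ R, ψ R) ∂μ
        = ∫ R, ⟪v R, w'⟫ ^ k * g (ρ R, ψ R) ∂μ := by
    intro Q hQ w' k
    have hQT : matAct ((Q : Matrix (Fin (e+2)) (Fin (e+2)) ℝ))ᵀ x = x := by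
      have h := Q.2.1
      rw [Stmt3Aux.star_eq_transpose] at h
      have h2 : matAct ((Q : Matrix (Fin (e+2)) (Fin (e+2)) ℝ))ᵀ x
          = matAct (((Q : Matrix (Fin (e+2)) (Fin (e+2)) ℝ))ᵀ
              * (Q : Matrix (Fin (e+2)) (Fin (e+2)) ℝ)) x := by
        rw [Stmt3Aux.matAct_mul, hQ]
      rw [h2, h, Stmt3Aux.matAct_one]
    have hvRQ : ∀ R, v (R * Q) = matAct ((Q : Matrix (Fin (e+2)) (Fin (e+2)) ℝ))ᵀ (v R)
        ∧ ρ (R * Q) = ρ R ∧ ψ (R * Q) = ψ R := by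
      intro R
      have hxbarRQ : xbar (R * Q)
          = matAct ((Q : Matrix (Fin (e+2)) (Fin (e+2)) ℝ))ᵀ (xbar R) := by
        rw [hxbar (R * Q), hxbar R]
        have hcoe : ((R * Q : Matrix.orthogonalGroup (Fin (e+2)) ℝ)
            : Matrix (Fin (e+2)) (Fin (e+2)) ℝ)
            = (R : Matrix (Fin (e+2)) (Fin (e+2)) ℝ) * (Q : Matrix (Fin (e+2)) (Fin (e+2)) ℝ) :=
          Matrix.UnitaryGroup.mul_val R Q
        rw [hcoe, Matrix.transpose_mul, Stmt3Aux.matAct_mul, Stmt3Aux.matAct_mul, hQ]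
      have hρRQ : ρ (R * Q) = ρ R := by
        rw [hρ (R * Q), hρ R, hxbarRQ, Stmt3Aux.inner_matAct_left, hQ]
      refine ⟨?_, hρRQ, ?_⟩
      · rw [hv (R * Q), hv R, hxbarRQ, hρRQ, Stmt3Aux.matAct_sub_smul, hQT]
      · rw [hψ (R * Q), hψ R, hxbarRQ, Stmt3Aux.norm_matAct (Stmt3Aux.transpose_mem Q)]
    have hri := Stmt3Aux.right_invariant_integral hHaar
      (fun R => ⟪v R, w'⟫ ^ k * g (ρ R, ψ R)) (hfMeas w' k) _ (hfBd w' k) Q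
    rw [← hri]
    congr 1
    funext R
    obtain ⟨h1, h2, h3⟩ := hvRQ R
    simp only [h1, h2, h3, Stmt3Aux.inner_matAct_left]
  -- Part 1 : reflection
  have part1 : ∫ R, ⟪v R, w⟫ * g (ρ R, ψ R) ∂μ = 0 := by
    set Q0 : Matrix.orthogonalGroup (Fin (e+2)) ℝ :=
      ⟨Stmt3Aux.refl x, Stmt3Aux.refl_mem x hsum_xx⟩ with hQ0def
    have hQ0x : matAct (Q0 : Matrix (Fin (e+2)) (Fin (e+2)) ℝ) x = x := by
      show matAct (Stmt3Aux.refl x) x = x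
      rw [Stmt3Aux.matAct_refl, hsum_xx, mul_one, two_smul]
      abel
    have hQ0w : matAct (Q0 : Matrix (Fin (e+2)) (Fin (e+2)) ℝ) w = -w := by
      show matAct (Stmt3Aux.refl x) w = -w
      rw [Stmt3Aux.matAct_refl]
      have h0 : ∑ j, x j * w j = 0 := by
        simpa [PiLp.inner_apply, RCLike.inner_apply, mul_comm] using hwx
      rw [h0]
      simp
    have h1 := master Q0 hQ0x w 1
    rw [hQ0w] at h1
    have h2 : (fun R => ⟪v R, -w⟫ ^ 1 * g (ρ R, ψ R))
        = fun R => -(⟪v R, w⟫ ^ 1 * g (ρ R, ψ R)) := by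
      funext R; rw [inner_neg_right]; ring
    rw [h2, integral_neg] at h1
    simp only [pow_one] at h1
    linarith
  refine ⟨part1, ?_⟩
  -- Part 2
  by_cases hw0 : w = 0
  · simp [hw0]
  · have hnw : ‖w‖ ≠ 0 := norm_ne_zero_iff.mpr hw0
    set u : EuclideanSpace ℝ (Fin (e+2)) := ‖w‖⁻¹ • w with hu
    have hun : ‖u‖ = 1 := by
      rw [hu, norm_smul, Real.norm_eq_abs, abs_of_nonneg (by positivity),
        inv_mul_cancel₀ hnw]
    have hux : ⟪u, x⟫ = 0 := by rw [hu, real_inner_smul_left, hw]; ring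
    have hxu : ⟪x, u⟫ = 0 := by rw [real_inner_comm]; exact hux
    have huu : ⟪u, u⟫ = 1 := by rw [real_inner_self_eq_norm_mul_norm, hun]; norm_num
    have hcard : Module.finrank ℝ (EuclideanSpace ℝ (Fin (e+2))) = Fintype.card (Fin (e+2)) := by
      simp [finrank_euclideanSpace_fin]
    have h01 : (0 : Fin (e+2)) ≠ 1 := by
      intro h
      have := congrArg Fin.val h
      simp [Fin.val_zero, Fin.val_one] at this
    set v0 : Fin (e+2) → EuclideanSpace ℝ (Fin (e+2)) := fun i => if i = 0 then x else u
      with hv0def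
    have hON : Orthonormal ℝ (Set.restrict {0, 1} v0) := by
      rw [orthonormal_iff_ite]
      rintro ⟨i, hi⟩ ⟨j, hj⟩
      have hi' : i = 0 ∨ i = 1 := by simpa using hi
      have hj' : j = 0 ∨ j = 1 := by simpa using hj
      rcases hi' with rfl | rfl <;> rcases hj' with rfl | rfl <;>
        simp [hv0def, h01, h01.symm, Subtype.ext_iff, hxx, huu, hux, hxu, Set.restrict, hx, hun]
    obtain ⟨b, hb⟩ := hON.exists_orthonormalBasis_extension_of_card_eq hcard
    have hb0 : b 0 = x := by
      have := hb 0 (by simp)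
      simpa [hv0def] using this
    have hb1 : b 1 = u := by
      have := hb 1 (by simp)
      simpa [hv0def, h01.symm] using this
    have hbKey : ∀ i : Fin (e+2), i ≠ 0 →
        ∫ R, ⟪v R, b i⟫ ^ 2 * g (ρ R, ψ R) ∂μ = ∫ R, ⟪v R, u⟫ ^ 2 * g (ρ R, ψ R) ∂μ := by
      intro i hi
      set L : EuclideanSpace ℝ (Fin (e+2)) ≃ₗᵢ[ℝ] EuclideanSpace ℝ (Fin (e+2)) :=
        b.repr.trans ((LinearIsometryEquiv.piLpCongrLeft 2 ℝ ℝ (Equiv.swap 1 i)).trans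
          b.repr.symm) with hL
      have hLb : ∀ j : Fin (e+2), L (b j) = b (Equiv.swap 1 i j) := by
        intro j
        rw [hL]
        simp only [LinearIsometryEquiv.trans_apply, OrthonormalBasis.repr_self]
        rw [EuclideanSpace.piLpCongrLeft_single, OrthonormalBasis.repr_symm_single]
      set Qi : Matrix.orthogonalGroup (Fin (e+2)) ℝ :=
        ⟨Stmt3Aux.isoMatrix L, Stmt3Aux.isoMatrix_mem L⟩ with hQidef
      have hQix : matAct (Qi : Matrix (Fin (e+2)) (Fin (e+2)) ℝ) x = x := by
        show matAct (Stmt3Aux.isoMatrix L) x = x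
        rw [Stmt3Aux.matAct_isoMatrix, ← hb0, hLb 0,
          Equiv.swap_apply_of_ne_of_ne h01 (Ne.symm hi)]
      have hQiu : matAct (Qi : Matrix (Fin (e+2)) (Fin (e+2)) ℝ) u = b i := by
        show matAct (Stmt3Aux.isoMatrix L) u = b i
        rw [Stmt3Aux.matAct_isoMatrix, ← hb1, hLb 1, Equiv.swap_apply_left]
      have := master Qi hQix u 2
      rw [hQiu] at this
      exact this
    have hsum : ∑ i, ∫ R, ⟪v R, b i⟫ ^ 2 * g (ρ R, ψ R) ∂μ
        = ∫ R, ‖v R‖ ^ 2 * g (ρ R, ψ R) ∂μ := by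
      rw [← integral_finset_sum _ (fun i _ => hfInt (b i) 2)]
      congr 1
      funext R
      rw [← Finset.sum_mul, Stmt3Aux.parseval b (v R)]
    have hterm0 : ∫ R, ⟪v R, b 0⟫ ^ 2 * g (ρ R, ψ R) ∂μ = 0 := by
      have hz : ∀ R, ⟪v R, b 0⟫ ^ 2 * g (ρ R, ψ R) = 0 := by
        intro R; rw [hb0, hvx R]; ring
      simp_rw [hz]
      simp
    have hcount : ∑ i, ∫ R, ⟪v R, b i⟫ ^ 2 * g (ρ R, ψ R) ∂μ
        = ((e : ℝ) + 1) * ∫ R, ⟪v R, u⟫ ^ 2 * g (ρ R, ψ R) ∂μ := by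
      rw [← Finset.add_sum_erase _ _ (Finset.mem_univ (0 : Fin (e+2))), hterm0, zero_add]
      rw [Finset.sum_congr rfl (fun i hi => hbKey i (Finset.ne_of_mem_erase hi))]
      rw [Finset.sum_const, Finset.card_erase_of_mem (Finset.mem_univ _), Finset.card_univ,
        Fintype.card_fin, nsmul_eq_mul]
      push_cast
      ring
    have hKu : ∫ R, ⟪v R, u⟫ ^ 2 * g (ρ R, ψ R) ∂μ
        = ‖w‖⁻¹ ^ 2 * ∫ R, ⟪v R, w⟫ ^ 2 * g (ρ R, ψ R) ∂μ := by
      rw [← integral_const_mul]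
      congr 1
      funext R
      rw [hu, real_inner_smul_right]
      ring
    have hfinal := hsum.symm.trans (hcount.trans (by rw [hKu]))
    -- hfinal : ∫ ‖v‖² g = (e+1) * (‖w‖⁻²  * ∫ ⟪v,w⟫² g)
    rw [hfinal]
    have hpos : (e : ℝ) + 1 ≠ 0 := by positivity
    have hcast : ((e + 2 : ℕ) : ℝ) - 1 = (e : ℝ) + 1 := by push_cast; ring
    rw [hcast]
    field_simp
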